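/- Let R be a finite nonempty index set of subpaths, where each subpath r ∈ R consists of n_r ≥ 1 segments with nonnegative travel times t^r : Fin n_r → ℝ and a deadline T^r ∈ ℝ satisfying Σ_i t^r_i < T^r. Then there exists a real number ρ > 0 such that for every r ∈ R, Σ_i ⌈t^r_i/ρ⌉·ρ ≤ T^r. -/

import Mathlib

/-- Discretization lemma: if every subpath's total travel time is strictly below its
deadline, there is a discrete time unit `ρ > 0` so that rounding every segment travel time
up to the nearest multiple of `ρ` still meets every subpath's deadline. -/
theorem exists_time_discretization (R : Type*) [Fintype R] [Nonempty R]
    (n : R → ℕ) (hn : ∀ r, 1 ≤ n r)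
    (t : (r : R) → Fin (n r) → ℝ) (ht : ∀ r i, 0 ≤ t r i)
    (T : R → ℝ) (hT : ∀ r, ∑ i, t r i < T r) :
    ∃ ρ : ℝ, 0 < ρ ∧ ∀ r, ∑ i, (⌈t r i / ρ⌉ : ℝ) * ρ ≤ T r := by
  set ε : R → ℝ := fun r => (T r - ∑ i, t r i) / (n r) with hε
  have hεpos : ∀ r, 0 < ε r := fun r =>
    div_pos (by linarith [hT r]) (by exact_mod_cast hn r)
  obtain ⟨r₀, -, hr₀⟩ := Finset.exists_min_image Finset.univ ε Finset.univ_nonempty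
  refine ⟨ε r₀, hεpos r₀, fun r => ?_⟩
  have hρ := hεpos r₀
  have hle : ε r₀ ≤ ε r := hr₀ r (Finset.mem_univ r)
  have key : ∀ i, (⌈t r i / ε r₀⌉ : ℝ) * ε r₀ ≤ t r i + ε r₀ := by
    intro i
    have h1 : (⌈t r i / ε r₀⌉ : ℝ) < t r i / ε r₀ + 1 := Int.ceil_lt_add_one _
    have := mul_le_mul_of_nonneg_right (le_of_lt h1) hρ.le
    have h2 : (t r i / ε r₀ + 1) * ε r₀ = t r i + ε r₀ := by
      field_simp
    linarith
  calc ∑ i, (⌈t r i / ε r₀⌉ : ℝ) * ε r₀ ≤ ∑ i, (t r i + ε r₀) :=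
        Finset.sum_le_sum fun i _ => key i
    _ = ∑ i, t r i + (n r) * ε r₀ := by
        rw [Finset.sum_add_distrib, Finset.sum_const, Finset.card_univ,
          Fintype.card_fin, nsmul_eq_mul]
    _ ≤ ∑ i, t r i + (n r) * ε r := by
        have : (0:ℝ) ≤ n r := Nat.cast_nonneg _
        nlinarith
    _ = T r := by
        have hnr : (n r : ℝ) ≠ 0 := by
          exact_mod_cast Nat.one_le_iff_ne_zero.mp (hn r)
        simp only [hε]
        rw [mul_div_cancel₀ _ hnr]
        ring
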